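/- Let q : X → Y be a bounded linear surjection of Banach spaces. Then there exists a continuous (not necessarily linear) map s : Y → X with q ∘ s = id_Y (Bartle–Graves selection theorem). -/

import Mathlib

open Set Function Filter Topology Metric

section BartleGravesAux

variable {𝕜 X Y : Type*} [RCLike 𝕜]
    [NormedAddCommGroup X] [NormedSpace 𝕜 X] [CompleteSpace X]
    [NormedAddCommGroup Y] [NormedSpace 𝕜 Y] [CompleteSpace Y]

/-- Approximate continuous selection: a continuous `u` with
`‖q (u y) - y‖ ≤ (1/2) ‖y‖` and `‖u y‖ ≤ C ‖y‖`. -/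
lemma bg_approx (q : X →L[𝕜] Y) (hq : Function.Surjective q) :
    ∃ C > (0:ℝ), ∃ u : Y → X, Continuous u ∧
      (∀ y, ‖q (u y) - y‖ ≤ (1/2) * ‖y‖) ∧ (∀ y, ‖u y‖ ≤ C * ‖y‖) := by
  classical
  obtain ⟨C, C0, hC⟩ := q.exists_preimage_norm_le hq
  set S := {y : Y // y ≠ 0} with hS
  choose x hx hxn using fun i : S => hC (i : Y)
  set U : S → Set S := fun i => {z : S | ‖(z : Y) - (i : Y)‖ < ‖(i : Y)‖ / 4} with hU
  have hUo : ∀ i, IsOpen (U i) := by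
    intro i
    exact isOpen_lt ((continuous_subtype_val.sub continuous_const).norm) continuous_const
  have hUc : (univ : Set S) ⊆ ⋃ i, U i := by
    intro z _
    refine mem_iUnion.2 ⟨z, ?_⟩
    have hz : (0:ℝ) < ‖(z : Y)‖ := norm_pos_iff.2 z.2
    simp only [hU, mem_setOf_eq, sub_self, norm_zero]
    positivity
  obtain ⟨f, hf⟩ := PartitionOfUnity.exists_isSubordinate isClosed_univ U hUo hUc
  -- key pointwise bounds on each set `U i`
  have key : ∀ i : S, ∀ z : S, z ∈ U i →
      ‖q (x i) - (z : Y)‖ ≤ (1/2) * ‖(z : Y)‖ ∧ ‖x i‖ ≤ (2*C) * ‖(z : Y)‖ := by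
    intro i z hz
    simp only [hU, mem_setOf_eq] at hz
    have hi : ‖(i : Y)‖ ≤ (4/3) * ‖(z : Y)‖ := by
      have h1 : ‖(i : Y)‖ ≤ ‖(z : Y)‖ + ‖(z : Y) - (i : Y)‖ := by
        have := norm_sub_norm_le ((z : Y)) ((i : Y))
        linarith [abs_le.1 (abs_norm_sub_norm_le ((z:Y)) ((i:Y)))]
      nlinarith [norm_nonneg ((z:Y)), norm_nonneg ((z:Y) - (i:Y))]
    constructor
    · have : ‖q (x i) - (z : Y)‖ = ‖(z : Y) - (i : Y)‖ := by
        rw [hx i, norm_sub_rev]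
      rw [this]
      nlinarith [norm_nonneg ((z:Y))]
    · have h2 := hxn i
      have hC1 : C * ‖(i : Y)‖ ≤ C * ((4/3) * ‖(z : Y)‖) :=
        mul_le_mul_of_nonneg_left hi C0.le
      nlinarith [mul_nonneg C0.le (norm_nonneg ((z:Y)))]
  -- the selection on the subtype
  set g : S → X := fun z => ∑ᶠ i, ((f i z : ℝ) : 𝕜) • x i with hgdef
  have hsupp : ∀ z : S, (support fun i => ((f i z : ℝ) : 𝕜) • x i) ⊆ ↑(f.finsupport z) := by
    intro z i hi
    rw [PartitionOfUnity.finsupport, Set.Finite.coe_toFinset]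
    simp only [mem_support] at hi ⊢
    intro h
    apply hi
    rw [h]
    simp
  have hg_eq : ∀ z : S, g z = ∑ i ∈ f.finsupport z, ((f i z : ℝ) : 𝕜) • x i := by
    intro z
    exact finsum_eq_sum_of_support_subset _ (hsupp z)
  have hmem : ∀ z : S, ∀ i ∈ f.finsupport z, z ∈ U i := by
    intro z i hi
    rw [f.mem_finsupport] at hi
    exact hf i (subset_tsupport _ hi)
  have hone : ∀ z : S, ∑ i ∈ f.finsupport z, f i z = 1 := fun z =>
    f.sum_finsupport (mem_univ z)
  -- bounds for g
  have hg1 : ∀ z : S, ‖q (g z) - (z : Y)‖ ≤ (1/2) * ‖(z : Y)‖ := by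
    intro z
    have hqg : q (g z) - (z : Y)
        = ∑ i ∈ f.finsupport z, ((f i z : ℝ) : 𝕜) • (q (x i) - (z : Y)) := by
      rw [hg_eq, map_sum]
      have hz : (z : Y) = ∑ i ∈ f.finsupport z, ((f i z : ℝ) : 𝕜) • (z : Y) := by
        rw [← Finset.sum_smul]
        have : (∑ i ∈ f.finsupport z, ((f i z : ℝ) : 𝕜)) = ((1:ℝ) : 𝕜) := by
          rw [← RCLike.ofReal_sum, hone z]
        rw [this]
        simp
      conv_lhs => rw [hz]
      rw [← Finset.sum_sub_distrib]
      congr 1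
      ext i
      rw [map_smul, smul_sub]
    rw [hqg]
    calc ‖∑ i ∈ f.finsupport z, ((f i z : ℝ) : 𝕜) • (q (x i) - (z : Y))‖
        ≤ ∑ i ∈ f.finsupport z, ‖((f i z : ℝ) : 𝕜) • (q (x i) - (z : Y))‖ :=
          norm_sum_le _ _
      _ ≤ ∑ i ∈ f.finsupport z, f i z * ((1/2) * ‖(z : Y)‖) := by
          apply Finset.sum_le_sum
          intro i hi
          rw [norm_smul, RCLike.norm_ofReal, abs_of_nonneg (f.nonneg i z)]
          exact mul_le_mul_of_nonneg_left ((key i z (hmem z i hi)).1) (f.nonneg i z)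
      _ = (1/2) * ‖(z : Y)‖ := by rw [← Finset.sum_mul, hone z, one_mul]
  have hg2 : ∀ z : S, ‖g z‖ ≤ (2*C) * ‖(z : Y)‖ := by
    intro z
    rw [hg_eq]
    calc ‖∑ i ∈ f.finsupport z, ((f i z : ℝ) : 𝕜) • x i‖
        ≤ ∑ i ∈ f.finsupport z, ‖((f i z : ℝ) : 𝕜) • x i‖ := norm_sum_le _ _
      _ ≤ ∑ i ∈ f.finsupport z, f i z * ((2*C) * ‖(z : Y)‖) := by
          apply Finset.sum_le_sum
          intro i hi
          rw [norm_smul, RCLike.norm_ofReal, abs_of_nonneg (f.nonneg i z)]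
          exact mul_le_mul_of_nonneg_left ((key i z (hmem z i hi)).2) (f.nonneg i z)
      _ = (2*C) * ‖(z : Y)‖ := by rw [← Finset.sum_mul, hone z, one_mul]
  -- continuity of g
  have hgc : Continuous g := by
    apply continuous_finsum
    · intro i
      exact ((RCLike.continuous_ofReal.comp (f i).continuous).smul continuous_const)
    · apply f.locallyFinite.subset
      intro i z hz
      simp only [mem_support] at hz ⊢
      intro h
      apply hz
      rw [h]
      simp
  -- extend to all of Y
  refine ⟨2*C, by positivity, fun y => if h : y = 0 then 0 else g ⟨y, h⟩, ?_, ?_, ?_⟩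
  · rw [continuous_iff_continuousAt]
    intro y
    by_cases hy : y = 0
    · subst hy
      have h0 : (fun y : Y => if h : y = 0 then (0:X) else g ⟨y, h⟩) 0 = 0 := by simp
      unfold ContinuousAt
      rw [h0]
      rw [tendsto_zero_iff_norm_tendsto_zero]
      apply squeeze_zero (fun y => norm_nonneg _)
        (g := fun y => (2*C) * ‖y‖)
      · intro t
        by_cases ht : t = 0
        · subst ht; simp
        · rw [dif_neg ht]
          exact hg2 ⟨t, ht⟩
      · have : Tendsto (fun y : Y => (2*C) * ‖y‖) (𝓝 0) (𝓝 ((2*C) * ‖(0:Y)‖)) :=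
          (continuous_const.mul continuous_norm).tendsto 0
        simpa using this
    · have hopen : IsOpen {y : Y | y ≠ 0} := isOpen_ne
      have hco : ContinuousOn (fun y : Y => if h : y = 0 then 0 else g ⟨y, h⟩)
          {y : Y | y ≠ 0} := by
        rw [continuousOn_iff_continuous_restrict]
        have : domRestrict {y : Y | y ≠ 0} (fun y : Y => if h : y = 0 then 0 else g ⟨y, h⟩)
            = fun z : {y : Y // y ≠ 0} => g z := by
          funext z
          simp only [domRestrict]
          rw [dif_neg z.2]
          rfl
        rw [this]
        exact hgc
      exact hco.continuousAt (hopen.mem_nhds hy)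
  · intro y
    by_cases hy : y = 0
    · subst hy; simp
    · simp only [dif_neg hy]; exact hg1 ⟨y, hy⟩
  · intro y
    by_cases hy : y = 0
    · subst hy; simp
    · simp only [dif_neg hy]; exact hg2 ⟨y, hy⟩

end BartleGravesAux

/-- Bartle–Graves selection theorem: a bounded linear surjection
`q : X → Y` of Banach spaces admits a continuous (not necessarily linear)
right inverse `s : Y → X`. -/
theorem stmt9 {𝕜 X Y : Type*} [RCLike 𝕜]
    [NormedAddCommGroup X] [NormedSpace 𝕜 X] [CompleteSpace X]
    [NormedAddCommGroup Y] [NormedSpace 𝕜 Y] [CompleteSpace Y]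
    (q : X →L[𝕜] Y) (hq : Function.Surjective q) :
    ∃ s : Y → X, Continuous s ∧ ∀ y : Y, q (s y) = y := by
  obtain ⟨C, hC0, u, hu_cont, hu1, hu2⟩ := bg_approx q hq
  set g : Y → Y := fun y => y - q (u y) with hg
  have hgc : Continuous g := continuous_id.sub (q.continuous.comp hu_cont)
  set r : ℕ → Y → Y := fun n => g^[n] with hr
  have hrc : ∀ n, Continuous (r n) := fun n => hgc.iterate n
  have hgb : ∀ y, ‖g y‖ ≤ (1/2) * ‖y‖ := by
    intro y
    have : g y = -(q (u y) - y) := by simp [hg]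
    rw [this, norm_neg]
    exact hu1 y
  have hrb : ∀ n y, ‖r n y‖ ≤ (1/2)^n * ‖y‖ := by
    intro n
    induction n with
    | zero => intro y; simp [hr]
    | succ n ih =>
      intro y
      have h1 : r (n+1) y = g (r n y) := Function.iterate_succ_apply' g n y
      rw [h1]
      calc ‖g (r n y)‖ ≤ (1/2) * ‖r n y‖ := hgb _
        _ ≤ (1/2) * ((1/2)^n * ‖y‖) := by
            apply mul_le_mul_of_nonneg_left (ih y); norm_num
        _ = (1/2)^(n+1) * ‖y‖ := by ring
  set w : ℕ → Y → X := fun n y => u (r n y) with hw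
  have hwb : ∀ n y, ‖w n y‖ ≤ C * ((1/2)^n * ‖y‖) := by
    intro n y
    calc ‖w n y‖ ≤ C * ‖r n y‖ := hu2 _
      _ ≤ C * ((1/2)^n * ‖y‖) := mul_le_mul_of_nonneg_left (hrb n y) hC0.le
  have hsummable : ∀ y, Summable (fun n => w n y) := by
    intro y
    apply Summable.of_norm_bounded ((summable_geometric_two.mul_right ‖y‖).mul_left C)
    exact fun n => hwb n y
  refine ⟨fun y => ∑' n, w n y, ?_, ?_⟩
  · rw [continuous_iff_continuousAt]
    intro y0
    set R := ‖y0‖ + 1 with hR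
    have hRpos : 0 < R := by positivity
    have hTU : TendstoUniformlyOn
        (fun t : Finset ℕ => fun y => ∑ n ∈ t, w n y) (fun y => ∑' n, w n y)
        atTop (ball (0:Y) R) := by
      apply tendstoUniformlyOn_tsum
        ((summable_geometric_two.mul_right R).mul_left C)
      intro n y hy
      calc ‖w n y‖ ≤ C * ((1/2)^n * ‖y‖) := hwb n y
        _ ≤ C * ((1/2)^n * R) := by
            apply mul_le_mul_of_nonneg_left _ hC0.le
            apply mul_le_mul_of_nonneg_left _ (by positivity)
            exact le_of_lt (by simpa using mem_ball_zero_iff.1 hy)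
    have hcontOn : ContinuousOn (fun y => ∑' n, w n y) (ball (0:Y) R) := by
      apply hTU.continuousOn
      apply Eventually.frequently
      apply Eventually.of_forall
      intro t
      exact (continuous_finset_sum t fun n _ => hu_cont.comp (hrc n)).continuousOn
    apply hcontOn.continuousAt
    apply isOpen_ball.mem_nhds
    rw [mem_ball_zero_iff]
    simp [hR]
  · intro y
    have hq_w : ∀ n, q (w n y) = r n y - r (n+1) y := by
      intro n
      have h1 : r (n+1) y = g (r n y) := Function.iterate_succ_apply' g n y
      rw [h1]
      simp [hg, hw]
    have hsum2 : Summable fun n => ‖q (w n y)‖ := by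
      apply Summable.of_nonneg_of_le (fun n => norm_nonneg _)
        (fun n => (q.le_opNorm _).trans
          (mul_le_mul_of_nonneg_left (hwb n y) (norm_nonneg q)))
      exact ((summable_geometric_two.mul_right ‖y‖).mul_left C).mul_left ‖q‖
    have htelescope : ∀ n, ∑ i ∈ Finset.range n, q (w i y) = y - r n y := by
      intro n
      simp only [hq_w]
      rw [Finset.sum_range_sub' (fun i => r i y)]
      simp [hr]
    have hr0 : Tendsto (fun n => r n y) atTop (𝓝 0) := by
      rw [tendsto_zero_iff_norm_tendsto_zero]
      apply squeeze_zero (fun n => norm_nonneg _) (fun n => hrb n y)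
      have h2 : Tendsto (fun n : ℕ => (1/2:ℝ)^n) atTop (𝓝 0) :=
        tendsto_pow_atTop_nhds_zero_of_lt_one (by norm_num) (by norm_num)
      simpa using h2.mul_const ‖y‖
    have htend : Tendsto (fun n => ∑ i ∈ Finset.range n, q (w i y)) atTop (𝓝 y) := by
      simp only [htelescope]
      simpa using tendsto_const_nhds.sub hr0
    have hHasSum : HasSum (fun n => q (w n y)) y :=
      (hasSum_iff_tendsto_nat_of_summable_norm hsum2).2 htend
    rw [q.map_tsum (hsummable y)]
    exact hHasSum.tsum_eq
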